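/- Let Q₁ and Q₂ be generator matrices on Fin N, each satisfying the mixing estimate with common constants C ≥ 1 and γ > 0, and suppose ‖Q₁ᵀ − Q₂ᵀ‖_{1→1} ≤ ε, where ‖·‖_{1→1} denotes the operator norm induced by the ℓ¹ norm. Let μ₁, μ₂ ∈ Δ satisfy Q₁ᵀ *ᵥ μ₁ = 0 and Q₂ᵀ *ᵥ μ₂ = 0. Then ‖μ₁ − μ₂‖₁ ≤ (C/γ) * ε. In particular, if Q : ℝ^d → Matrix (Fin N) (Fin N) ℝ is a family with ‖(Q θ)ᵀ − (Q θ̄)ᵀ‖_{1→1} ≤ L_Q * ‖θ − θ̄‖, the stationary laws satisfy ‖μ_θ − μ_{θ̄}‖₁ ≤ (C * L_Q / γ) * ‖θ − θ̄‖. -/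

import Mathlib

open Matrix

/-- The probability simplex on `Fin N`. -/
def probSimplex (N : ℕ) : Set (Fin N → ℝ) :=
  {μ | (∀ i, 0 ≤ μ i) ∧ ∑ i, μ i = 1}

/-- The ℓ¹ norm on `Fin N → ℝ`. -/
def l1norm {N : ℕ} (x : Fin N → ℝ) : ℝ := ∑ i, |x i|

/-- A generator (transition-rate) matrix: nonnegative off-diagonal entries and zero row sums. -/
def IsGenerator {N : ℕ} (Q : Matrix (Fin N) (Fin N) ℝ) : Prop :=
  (∀ i j, i ≠ j → 0 ≤ Q i j) ∧ (∀ i, ∑ j, Q i j = 0)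

/-- The uniform exponential mixing estimate on the zero-sum subspace. -/
def MixingEstimate {N : ℕ} (Q : Matrix (Fin N) (Fin N) ℝ) (C γ : ℝ) : Prop :=
  ∀ ξ : Fin N → ℝ, (∑ i, ξ i) = 0 → ∀ t : ℝ, 0 ≤ t →
    l1norm (NormedSpace.exp (t • Qᵀ) *ᵥ ξ) ≤ C * Real.exp (-γ * t) * l1norm ξ

lemma l1norm_nonneg' {N : ℕ} (x : Fin N → ℝ) : 0 ≤ l1norm x :=
  Finset.sum_nonneg fun _ _ => abs_nonneg _

lemma l1norm_add_le' {N : ℕ} (x y : Fin N → ℝ) : l1norm (x + y) ≤ l1norm x + l1norm y := by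
  unfold l1norm
  rw [← Finset.sum_add_distrib]
  exact Finset.sum_le_sum fun i _ => by simpa using abs_add_le (x i) (y i)

lemma exp_mulVec_fixed' {N : ℕ} (A : Matrix (Fin N) (Fin N) ℝ) (v : Fin N → ℝ)
    (h : A *ᵥ v = 0) : NormedSpace.exp A *ᵥ v = v := by
  letI : NormedRing (Matrix (Fin N) (Fin N) ℝ) := Matrix.linftyOpNormedRing
  letI : NormedAlgebra ℝ (Matrix (Fin N) (Fin N) ℝ) := Matrix.linftyOpNormedAlgebra
  have hpow : ∀ n : ℕ, A ^ (n + 1) *ᵥ v = 0 := by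
    intro n
    induction n with
    | zero => simpa using h
    | succ k ih => rw [pow_succ, ← Matrix.mulVec_mulVec, h, Matrix.mulVec_zero]
  let L : Matrix (Fin N) (Fin N) ℝ →ₗ[ℝ] (Fin N → ℝ) :=
    { toFun := fun M => M *ᵥ v
      map_add' := fun M₁ M₂ => Matrix.add_mulVec _ _ _
      map_smul' := fun c M => by simpa using Matrix.smul_mulVec c M v }
  let Lc : Matrix (Fin N) (Fin N) ℝ →L[ℝ] (Fin N → ℝ) :=
    { L with cont := L.continuous_of_finiteDimensional }
  have hsum : Summable (fun n : ℕ => (n.factorial : ℝ)⁻¹ • A ^ n) :=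
    NormedSpace.expSeries_summable' A
  have key : NormedSpace.exp A *ᵥ v = Lc (NormedSpace.exp A) := rfl
  rw [key, NormedSpace.exp_eq_tsum ℝ, Lc.map_tsum hsum]
  rw [tsum_eq_single 0]
  · simp [Lc, L]
  · intro n hn
    obtain ⟨k, rfl⟩ := Nat.exists_eq_succ_of_ne_zero hn
    rw [_root_.map_smul]
    have hz : Lc (A ^ (k + 1)) = 0 := hpow k
    rw [hz, smul_zero]

lemma hasDerivAt_exp_smul_mulVec' {N : ℕ} (A : Matrix (Fin N) (Fin N) ℝ) (v : Fin N → ℝ)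
    (t : ℝ) :
    HasDerivAt (fun s : ℝ => NormedSpace.exp (s • A) *ᵥ v)
      (NormedSpace.exp (t • A) *ᵥ (A *ᵥ v)) t := by
  letI : NormedRing (Matrix (Fin N) (Fin N) ℝ) := Matrix.linftyOpNormedRing
  letI : NormedAlgebra ℝ (Matrix (Fin N) (Fin N) ℝ) := Matrix.linftyOpNormedAlgebra
  have h := hasDerivAt_exp_smul_const (𝕂 := ℝ) A t
  let L : Matrix (Fin N) (Fin N) ℝ →ₗ[ℝ] (Fin N → ℝ) :=
    { toFun := fun M => M *ᵥ v
      map_add' := fun M₁ M₂ => Matrix.add_mulVec _ _ _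
      map_smul' := fun c M => by simpa using Matrix.smul_mulVec c M v }
  let Lc : Matrix (Fin N) (Fin N) ℝ →L[ℝ] (Fin N → ℝ) :=
    { L with cont := L.continuous_of_finiteDimensional }
  have h2 := Lc.hasFDerivAt.comp_hasDerivAt t h
  have h3 : Lc (NormedSpace.exp (t • A) * A) = NormedSpace.exp (t • A) *ᵥ (A *ᵥ v) := by
    show (NormedSpace.exp (t • A) * A) *ᵥ v = _
    rw [← Matrix.mulVec_mulVec]
  exact h2.congr_deriv h3

theorem stationary_law_lipschitz {N : ℕ} (hN : 1 ≤ N)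
    (Q₁ Q₂ : Matrix (Fin N) (Fin N) ℝ) (hQ₁ : IsGenerator Q₁) (hQ₂ : IsGenerator Q₂)
    (C γ : ℝ) (hC : 1 ≤ C) (hγ : 0 < γ)
    (hmix₁ : MixingEstimate Q₁ C γ) (hmix₂ : MixingEstimate Q₂ C γ)
    (ε : ℝ) (hε : 0 ≤ ε)
    (hop : ∀ x : Fin N → ℝ, l1norm ((Q₁ᵀ - Q₂ᵀ) *ᵥ x) ≤ ε * l1norm x)
    (μ₁ μ₂ : Fin N → ℝ) (hμ₁ : μ₁ ∈ probSimplex N) (hμ₂ : μ₂ ∈ probSimplex N)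
    (hstat₁ : Q₁ᵀ *ᵥ μ₁ = 0) (hstat₂ : Q₂ᵀ *ᵥ μ₂ = 0) :
    l1norm (μ₁ - μ₂) ≤ C / γ * ε := by
  obtain ⟨hμ₁pos, hμ₁sum⟩ := hμ₁
  obtain ⟨hμ₂pos, hμ₂sum⟩ := hμ₂
  set ξ : Fin N → ℝ := μ₁ - μ₂ with hξdef
  set v : Fin N → ℝ := Q₁ᵀ *ᵥ μ₂ with hvdef
  have hvdiff : v = (Q₁ᵀ - Q₂ᵀ) *ᵥ μ₂ := by
    rw [Matrix.sub_mulVec, hstat₂, sub_zero]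
  have hl1μ₂ : l1norm μ₂ = 1 := by
    unfold l1norm
    rw [← hμ₂sum]
    exact Finset.sum_congr rfl fun i _ => abs_of_nonneg (hμ₂pos i)
  have hvnorm : l1norm v ≤ ε := by
    rw [hvdiff]
    calc l1norm ((Q₁ᵀ - Q₂ᵀ) *ᵥ μ₂) ≤ ε * l1norm μ₂ := hop μ₂
    _ = ε := by rw [hl1μ₂, mul_one]
  have hξsum : ∑ i, ξ i = 0 := by
    simp [hξdef, Finset.sum_sub_distrib, hμ₁sum, hμ₂sum]
  have hvsum : ∑ i, v i = 0 := by
    have h1 : ∑ i, v i = ∑ j, (∑ i, Q₁ j i) * μ₂ j := by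
      simp only [hvdef, Matrix.mulVec, dotProduct, Matrix.transpose_apply,
        Finset.sum_mul]
      exact Finset.sum_comm
    rw [h1]
    simp [hQ₁.2]
  -- key estimate for each t ≥ 0
  have key : ∀ t : ℝ, 0 ≤ t →
      l1norm ξ ≤ C * Real.exp (-γ * t) * l1norm ξ + C / γ * ε := by
    intro t ht
    have hfix : NormedSpace.exp (t • Q₁ᵀ) *ᵥ μ₁ = μ₁ := by
      apply exp_mulVec_fixed'
      rw [Matrix.smul_mulVec, hstat₁, smul_zero]
    have hderiv : ∀ s : ℝ,
        HasDerivAt (fun u : ℝ => NormedSpace.exp (u • Q₁ᵀ) *ᵥ μ₂)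
          (NormedSpace.exp (s • Q₁ᵀ) *ᵥ v) s := fun s =>
      hasDerivAt_exp_smul_mulVec' Q₁ᵀ μ₂ s
    have hcontv : Continuous (fun s : ℝ => NormedSpace.exp (s • Q₁ᵀ) *ᵥ v) := by
      refine continuous_iff_continuousAt.2 fun s => ?_
      exact (hasDerivAt_exp_smul_mulVec' Q₁ᵀ v s).continuousAt
    have hFTC : ∀ i, (∫ s in (0:ℝ)..t, (NormedSpace.exp (s • Q₁ᵀ) *ᵥ v) i) =
        (NormedSpace.exp (t • Q₁ᵀ) *ᵥ μ₂) i - μ₂ i := by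
      intro i
      have h1 : ∀ s ∈ Set.uIcc (0:ℝ) t,
          HasDerivAt (fun u : ℝ => (NormedSpace.exp (u • Q₁ᵀ) *ᵥ μ₂) i)
            ((NormedSpace.exp (s • Q₁ᵀ) *ᵥ v) i) s :=
        fun s _ => hasDerivAt_pi.1 (hderiv s) i
      have h2 : IntervalIntegrable (fun s => (NormedSpace.exp (s • Q₁ᵀ) *ᵥ v) i)
          MeasureTheory.volume 0 t :=
        ((continuous_apply i).comp hcontv).intervalIntegrable 0 t
      have h3 := intervalIntegral.integral_eq_sub_of_hasDerivAt h1 h2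
      rw [h3]
      simp [NormedSpace.exp_zero, Matrix.one_mulVec]
    -- decomposition
    have hdecomp : ξ = NormedSpace.exp (t • Q₁ᵀ) *ᵥ ξ +
        (NormedSpace.exp (t • Q₁ᵀ) *ᵥ μ₂ - μ₂) := by
      rw [hξdef, Matrix.mulVec_sub, hfix]
      abel
    -- bound on the integral term
    have hintbound : l1norm (NormedSpace.exp (t • Q₁ᵀ) *ᵥ μ₂ - μ₂) ≤ C / γ * ε := by
      have habs : ∀ i, |(NormedSpace.exp (t • Q₁ᵀ) *ᵥ μ₂) i - μ₂ i| ≤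
          ∫ s in (0:ℝ)..t, |(NormedSpace.exp (s • Q₁ᵀ) *ᵥ v) i| := by
        intro i
        rw [← hFTC i]
        exact intervalIntegral.abs_integral_le_integral_abs ht
      have hint_i : ∀ i : Fin N, IntervalIntegrable
          (fun s => |(NormedSpace.exp (s • Q₁ᵀ) *ᵥ v) i|) MeasureTheory.volume 0 t :=
        fun i => (((continuous_apply i).comp hcontv).abs).intervalIntegrable 0 t
      have hsum_int : ∑ i, (∫ s in (0:ℝ)..t, |(NormedSpace.exp (s • Q₁ᵀ) *ᵥ v) i|) =
          ∫ s in (0:ℝ)..t, l1norm (NormedSpace.exp (s • Q₁ᵀ) *ᵥ v) := by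
        rw [← intervalIntegral.integral_finset_sum]
        · rfl
        · intro i _; exact hint_i i
      have hcontl1 : Continuous (fun s : ℝ => l1norm (NormedSpace.exp (s • Q₁ᵀ) *ᵥ v)) := by
        unfold l1norm
        exact continuous_finset_sum _ fun i _ => ((continuous_apply i).comp hcontv).abs
      have hmono : (∫ s in (0:ℝ)..t, l1norm (NormedSpace.exp (s • Q₁ᵀ) *ᵥ v)) ≤
          ∫ s in (0:ℝ)..t, C * Real.exp (-γ * s) * ε := by
        apply intervalIntegral.integral_mono_on ht
          (hcontl1.intervalIntegrable 0 t)
          (((continuous_const.mul ((Real.continuous_exp.comp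
            (continuous_const.mul continuous_id)))).mul continuous_const).intervalIntegrable 0 t)
        intro s hs
        calc l1norm (NormedSpace.exp (s • Q₁ᵀ) *ᵥ v)
            ≤ C * Real.exp (-γ * s) * l1norm v := hmix₁ v hvsum s hs.1
          _ ≤ C * Real.exp (-γ * s) * ε := by
              apply mul_le_mul_of_nonneg_left hvnorm
              positivity
      have hexp_int : (∫ s in (0:ℝ)..t, C * Real.exp (-γ * s) * ε) ≤ C / γ * ε := by
        have hF : ∀ s : ℝ, HasDerivAt (fun u : ℝ => -(C * ε / γ) * Real.exp (-γ * u))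
            (C * Real.exp (-γ * s) * ε) s := by
          intro s
          have h1 : HasDerivAt (fun u : ℝ => -γ * u) (-γ) s := by
            simpa using (hasDerivAt_id s).const_mul (-γ)
          have h2 := (Real.hasDerivAt_exp (-γ * s)).comp s h1
          have h3 := h2.const_mul (-(C * ε / γ))
          refine h3.congr_deriv ?_
          have hγ0 : γ⁻¹ * γ = 1 := inv_mul_cancel₀ hγ.ne'
          linear_combination (C * ε * Real.exp (-γ * s)) * hγ0
        have hicont : IntervalIntegrable (fun s => C * Real.exp (-γ * s) * ε)
            MeasureTheory.volume 0 t :=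
          ((continuous_const.mul ((Real.continuous_exp.comp
            (continuous_const.mul continuous_id)))).mul continuous_const).intervalIntegrable 0 t
        rw [intervalIntegral.integral_eq_sub_of_hasDerivAt (fun s _ => hF s) hicont]
        have h4 : Real.exp (-γ * 0) = 1 := by simp
        have h5 : 0 < Real.exp (-γ * t) := Real.exp_pos _
        have h6 : Real.exp (-γ * t) ≤ 1 := by
          apply Real.exp_le_one_iff.2
          nlinarith
        have hCpos : (0:ℝ) < C := lt_of_lt_of_le one_pos hC
        rw [h4]
        have h7 : 0 ≤ C * ε / γ := by positivity
        have h8 : C * ε / γ = C / γ * ε := by ring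
        nlinarith [mul_nonneg h7 h5.le]
      calc l1norm (NormedSpace.exp (t • Q₁ᵀ) *ᵥ μ₂ - μ₂)
          = ∑ i, |(NormedSpace.exp (t • Q₁ᵀ) *ᵥ μ₂) i - μ₂ i| := rfl
        _ ≤ ∑ i, ∫ s in (0:ℝ)..t, |(NormedSpace.exp (s • Q₁ᵀ) *ᵥ v) i| :=
            Finset.sum_le_sum fun i _ => habs i
        _ = ∫ s in (0:ℝ)..t, l1norm (NormedSpace.exp (s • Q₁ᵀ) *ᵥ v) := hsum_int
        _ ≤ ∫ s in (0:ℝ)..t, C * Real.exp (-γ * s) * ε := hmono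
        _ ≤ C / γ * ε := hexp_int
    calc l1norm ξ
        = l1norm (NormedSpace.exp (t • Q₁ᵀ) *ᵥ ξ +
            (NormedSpace.exp (t • Q₁ᵀ) *ᵥ μ₂ - μ₂)) := by rw [← hdecomp]
      _ ≤ l1norm (NormedSpace.exp (t • Q₁ᵀ) *ᵥ ξ) +
            l1norm (NormedSpace.exp (t • Q₁ᵀ) *ᵥ μ₂ - μ₂) := l1norm_add_le' _ _
      _ ≤ C * Real.exp (-γ * t) * l1norm ξ + C / γ * ε :=
          add_le_add (hmix₁ ξ hξsum t ht) hintbound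
  -- take the limit t → ∞
  have hlim : Filter.Tendsto
      (fun t : ℝ => C * Real.exp (-γ * t) * l1norm ξ + C / γ * ε)
      Filter.atTop (nhds (C / γ * ε)) := by
    have h1 : Filter.Tendsto (fun t : ℝ => Real.exp (-γ * t)) Filter.atTop (nhds 0) := by
      have h2 : Filter.Tendsto (fun t : ℝ => γ * t) Filter.atTop Filter.atTop :=
        Filter.Tendsto.const_mul_atTop hγ Filter.tendsto_id
      have h3 := Real.tendsto_exp_neg_atTop_nhds_zero.comp h2
      simpa [Function.comp_def, neg_mul] using h3
    have h4 := ((h1.const_mul C).mul_const (l1norm ξ)).add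
      (tendsto_const_nhds (x := C / γ * ε))
    simpa using h4
  exact ge_of_tendsto hlim (Filter.eventually_atTop.2 ⟨0, fun t ht => key t ht⟩)
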